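/- For any k > 0 and ε > 0 there exists t(ε) > 0 (depending only on ε) such that for all 0 < α ≤ t(ε): (1/√(2π))·(√(2π)·α·Φ^{-1}(1−α))^{k²} ≤ φ(k·Φ^{-1}(1−α)) ≤ (1/√(2π))·((1+ε)·√(2π)·α·Φ^{-1}(1−α))^{k²}. -/

import Mathlib

noncomputable def phi (x : ℝ) : ℝ := (Real.sqrt (2 * Real.pi))⁻¹ * Real.exp (-x ^ 2 / 2)

noncomputable def Phi (t : ℝ) : ℝ := ∫ z in Set.Iic t, phi z

/-- The standard normal quantile function. -/
noncomputable def Phiinv (p : ℝ) : ℝ := sInf {t : ℝ | p ≤ Phi t}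

open Real MeasureTheory Set Filter

lemma sqrt2pi_pos : 0 < Real.sqrt (2 * Real.pi) := Real.sqrt_pos.2 (by positivity)

lemma phi_eq (x : ℝ) : phi x = (Real.sqrt (2 * Real.pi))⁻¹ * Real.exp (-(1/2) * x ^ 2) := by
  unfold phi; ring_nf

lemma phi_pos (x : ℝ) : 0 < phi x := by
  unfold phi; positivity

lemma phi_cont : Continuous phi := by
  unfold phi; continuity

lemma phi_integrable : Integrable phi := by
  have h := (integrable_exp_neg_mul_sq (by norm_num : (0:ℝ) < 1/2)).const_mul
    (Real.sqrt (2 * Real.pi))⁻¹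
  refine h.congr ?_
  filter_upwards with x
  rw [phi_eq]

lemma integral_phi : ∫ x, phi x = 1 := by
  have : ∫ x, phi x = (Real.sqrt (2 * Real.pi))⁻¹ * ∫ x, Real.exp (-(1/2) * x ^ 2) := by
    rw [← integral_const_mul]
    congr 1; ext x; rw [phi_eq]
  rw [this, integral_gaussian]
  have : Real.pi / (1/2) = 2 * Real.pi := by ring
  rw [this, inv_mul_cancel₀ (ne_of_gt sqrt2pi_pos)]

lemma phi_tendsto : Tendsto phi atTop (nhds 0) := by
  have h1 : Tendsto (fun x : ℝ => -x ^ 2 / 2) atTop atBot := by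
    apply Tendsto.atBot_div_const (by norm_num)
    exact tendsto_neg_atBot_iff.mpr (tendsto_pow_atTop (by norm_num))
  have h2 := (Real.tendsto_exp_atBot.comp h1).const_mul (Real.sqrt (2 * Real.pi))⁻¹
  rw [mul_zero] at h2
  exact h2.congr (fun x => rfl)

lemma hasDerivAt_neg_phi (z : ℝ) : HasDerivAt (fun z => -phi z) (z * phi z) z := by
  have h : HasDerivAt (fun z : ℝ => -z ^ 2 / 2) (-z) z := by
    have := ((hasDerivAt_pow 2 z).neg).div_const 2
    simpa using this.congr_deriv (by ring)
  have := ((h.exp).const_mul (Real.sqrt (2 * Real.pi))⁻¹).neg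
  convert this using 1
  · rfl
  · rfl
  · rfl
  unfold phi; ring

lemma integrable_id_mul_phi : Integrable (fun z => z * phi z) := by
  have h := integrable_rpow_mul_exp_neg_mul_sq (by norm_num : (0:ℝ) < 1/2) (s := 1)
    (by norm_num)
  have := (h.const_mul (Real.sqrt (2 * Real.pi))⁻¹)
  refine this.congr ?_
  filter_upwards with x
  rw [phi_eq, Real.rpow_one]; ring

lemma integral_Ioi_id_mul_phi (x : ℝ) : ∫ z in Ioi x, z * phi z = phi x := by
  have := integral_Ioi_of_hasDerivAt_of_tendsto (f := fun z => -phi z)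
    (f' := fun z => z * phi z) (a := x) (m := 0)
    (phi_cont.neg.continuousWithinAt)
    (fun z _ => hasDerivAt_neg_phi z)
    integrable_id_mul_phi.integrableOn
    (by simpa using phi_tendsto.neg)
  simpa using this

lemma hasDerivAt_neg_phi_div (z : ℝ) (hz : z ≠ 0) :
    HasDerivAt (fun z => -phi z / z) (phi z * (1 + 1/z^2)) z := by
  have h := ((hasDerivAt_neg_phi z).div (hasDerivAt_id z) hz)
  convert h using 1
  · rfl
  · rfl
  · rfl
  simp only [id]
  field_simp
  ring

lemma integrableOn_phi_mill (x : ℝ) (hx : 0 < x) :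
    IntegrableOn (fun z => phi z * (1 + 1/z^2)) (Ioi x) := by
  apply Integrable.mono' (g := fun z => (1 + 1/x^2) * phi z)
    ((phi_integrable.const_mul _).integrableOn)
  · apply ContinuousOn.aestronglyMeasurable _ measurableSet_Ioi
    apply ContinuousOn.mul phi_cont.continuousOn
    apply ContinuousOn.add continuousOn_const
    apply ContinuousOn.div continuousOn_const (by fun_prop)
    intro z hz
    exact pow_ne_zero _ (hx.trans hz).ne'
  · filter_upwards [ae_restrict_mem measurableSet_Ioi] with z hz
    have hxz : x < z := hz
    have h1 : (0:ℝ) < z := hx.trans hxz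
    rw [Real.norm_eq_abs, abs_of_pos (by have := phi_pos z; positivity)]
    have : 1/z^2 ≤ 1/x^2 := by
      apply one_div_le_one_div_of_le (by positivity)
      nlinarith
    nlinarith [phi_pos z]

lemma integral_Ioi_phi_mill (x : ℝ) (hx : 0 < x) :
    ∫ z in Ioi x, phi z * (1 + 1/z^2) = phi x / x := by
  have := integral_Ioi_of_hasDerivAt_of_tendsto (f := fun z => -phi z / z)
    (f' := fun z => phi z * (1 + 1/z^2)) (a := x) (m := 0)
    (((phi_cont.neg.continuousAt).div continuousAt_id hx.ne').continuousWithinAt)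
    (fun z hz => hasDerivAt_neg_phi_div z (hx.trans hz).ne')
    (integrableOn_phi_mill x hx)
    ?_
  · rw [this]; ring
  · have h := (phi_tendsto.neg).div_atTop (f := fun z => -phi z) tendsto_id
    simpa using h

noncomputable def rr (x : ℝ) : ℝ := ∫ z in Ioi x, phi z

lemma rr_nonneg (x : ℝ) : 0 ≤ rr x :=
  setIntegral_nonneg measurableSet_Ioi (fun z _ => (phi_pos z).le)

lemma Phi_add_rr (t : ℝ) : Phi t + rr t = 1 := by
  rw [Phi, rr, intervalIntegral.integral_Iic_add_Ioi phi_integrable.integrableOn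
    phi_integrable.integrableOn, integral_phi]

lemma mill_upper (x : ℝ) (hx : 0 < x) : rr x ≤ phi x / x := by
  have h1 : rr x ≤ ∫ z in Ioi x, x⁻¹ * (z * phi z) := by
    apply setIntegral_mono_on phi_integrable.integrableOn
      ((integrable_id_mul_phi.const_mul x⁻¹).integrableOn) measurableSet_Ioi
    intro z hz
    have hxz : x < z := hz
    have h2 : 1 * phi z ≤ (x⁻¹ * z) * phi z := by
      apply mul_le_mul_of_nonneg_right _ (phi_pos z).le
      rw [one_le_inv_mul₀ hx]; exact hxz.le
    calc phi z = 1 * phi z := (one_mul _).symm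
      _ ≤ (x⁻¹ * z) * phi z := h2
      _ = x⁻¹ * (z * phi z) := by ring
  rw [integral_const_mul, integral_Ioi_id_mul_phi] at h1
  rw [div_eq_inv_mul]; exact h1

lemma mill_lower (x : ℝ) (hx : 0 < x) : phi x / x ≤ (1 + 1/x^2) * rr x := by
  have h1 : ∫ z in Ioi x, phi z * (1 + 1/z^2) ≤ ∫ z in Ioi x, (1 + 1/x^2) * phi z := by
    apply setIntegral_mono_on (integrableOn_phi_mill x hx)
      ((phi_integrable.const_mul _).integrableOn) measurableSet_Ioi
    intro z hz
    have hxz : x < z := hz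
    have hz0 : 0 < z := hx.trans hxz
    have : 1/z^2 ≤ 1/x^2 := by
      apply one_div_le_one_div_of_le (by positivity); nlinarith
    nlinarith [phi_pos z]
  rw [integral_Ioi_phi_mill x hx, integral_const_mul] at h1
  exact h1

lemma Phi_strictMono : StrictMono Phi := by
  intro a b hab
  have h : Phi b - Phi a = ∫ z in a..b, phi z :=
    intervalIntegral.integral_Iic_sub_Iic phi_integrable.integrableOn phi_integrable.integrableOn
  have hpos : 0 < ∫ z in a..b, phi z :=
    intervalIntegral.intervalIntegral_pos_of_pos
      (phi_integrable.intervalIntegrable) (fun z => phi_pos z) hab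
  linarith

lemma Phi_cont : Continuous Phi := by
  have h : ∀ t, Phi t = Phi 0 + ∫ z in (0:ℝ)..t, phi z := by
    intro t
    have := intervalIntegral.integral_Iic_sub_Iic (a := (0:ℝ)) (b := t)
      phi_integrable.integrableOn phi_integrable.integrableOn
    rw [Phi, Phi]; linarith [this]
  have hc : Continuous fun t => Phi 0 + ∫ z in (0:ℝ)..t, phi z := by
    apply continuous_const.add
    exact intervalIntegral.continuous_primitive
      (fun a b => phi_integrable.intervalIntegrable) 0
  exact hc.congr (fun t => (h t).symm)

lemma Phi_lt_one (t : ℝ) : Phi t < 1 := by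
  have h1 := Phi_add_rr (t+1)
  have h2 := rr_nonneg (t+1)
  have := Phi_strictMono (show t < t + 1 by linarith)
  linarith

lemma exists_Phi_ge (p : ℝ) (hp : p < 1) : ∃ T : ℝ, 1 ≤ T ∧ p ≤ Phi T := by
  have h1 : Tendsto (fun x => phi x / x) atTop (nhds 0) := by
    simpa using phi_tendsto.div_atTop tendsto_id
  have h2 : ∀ᶠ x in atTop, phi x / x < 1 - p :=
    (h1.eventually (eventually_lt_nhds (by linarith : (0:ℝ) < 1 - p)))
  obtain ⟨T, hT1, hT2⟩ := (h2.and (eventually_ge_atTop (1:ℝ))).exists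
  refine ⟨T, hT2, ?_⟩
  have h3 := mill_upper T (by linarith)
  have h4 := Phi_add_rr T
  linarith

lemma Phiinv_eq (p x : ℝ) (hx : Phi x = p) : Phiinv p = x := by
  have hset : {t : ℝ | p ≤ Phi t} = Ici x := by
    ext t
    simp only [mem_setOf_eq, mem_Ici, ← hx]
    exact ⟨fun h => Phi_strictMono.le_iff_le.mp h, fun h => Phi_strictMono.monotone h⟩
  rw [Phiinv, hset, csInf_Ici]

set_option maxHeartbeats 1000000 in
/-- For every `ε > 0` there is `t(ε) > 0` (depending only on `ε`) such that for all
`k > 0` and `0 < α ≤ t(ε)`: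
`(1/√(2π)) (√(2π) α Φ⁻¹(1-α))^{k²} ≤ φ(k Φ⁻¹(1-α)) ≤ (1/√(2π)) ((1+ε) √(2π) α Φ⁻¹(1-α))^{k²}`. -/
theorem k_phi_of_Phiinv_bounds (ε : ℝ) (hε : 0 < ε) :
    ∃ t : ℝ, 0 < t ∧ ∀ k α : ℝ, 0 < k → 0 < α → α ≤ t →
      (Real.sqrt (2 * Real.pi))⁻¹ *
          (Real.sqrt (2 * Real.pi) * α * Phiinv (1 - α)) ^ (k ^ 2) ≤
        phi (k * Phiinv (1 - α)) ∧
      phi (k * Phiinv (1 - α)) ≤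
        (Real.sqrt (2 * Real.pi))⁻¹ *
          ((1 + ε) * Real.sqrt (2 * Real.pi) * α * Phiinv (1 - α)) ^ (k ^ 2) := by
  set c := Real.sqrt (2 * Real.pi) with hc
  have hc0 : 0 < c := sqrt2pi_pos
  set M : ℝ := max 1 (Real.sqrt ε)⁻¹ with hM
  have hM1 : 1 ≤ M := le_max_left _ _
  refine ⟨1 - Phi M, by linarith [Phi_lt_one M], ?_⟩
  intro k α hk hα hαt
  set p := 1 - α with hp
  have hpM : Phi M ≤ p := by simp only [hp]; linarith
  have hp1 : p < 1 := by linarith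
  obtain ⟨T, hT1, hT2⟩ := exists_Phi_ge p hp1
  set T' := max T M with hT'
  have hMT' : M ≤ T' := le_max_right _ _
  have hpT' : p ≤ Phi T' := hT2.trans (Phi_strictMono.monotone (le_max_left _ _))
  obtain ⟨x, hxmem, hPx⟩ := intermediate_value_Icc hMT' Phi_cont.continuousOn ⟨hpM, hpT'⟩
  have hxM : M ≤ x := hxmem.1
  have hx1 : 1 ≤ x := hM1.trans hxM
  have hx0 : 0 < x := by linarith
  have hinv : Phiinv (1 - α) = x := Phiinv_eq p x hPx
  have hrx : rr x = α := by have := Phi_add_rr x; rw [hPx] at this; linarith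
  -- Mill's ratio consequences
  have hup : α * x ≤ phi x := by
    have h := mill_upper x hx0
    rw [hrx] at h
    calc α * x ≤ (phi x / x) * x := by nlinarith
      _ = phi x := by field_simp
  have hxe : 1 / x ≤ ε * x := by
    have h1 : (Real.sqrt ε)⁻¹ ≤ x := (le_max_right _ _).trans hxM
    have h2 : 1 ≤ x * Real.sqrt ε := by
      rw [← inv_le_iff_one_le_mul₀ (Real.sqrt_pos.2 hε)] at *
      exact h1
    have h3 : 1 ≤ x^2 * ε := by
      nlinarith [Real.sq_sqrt hε.le, Real.sqrt_nonneg ε]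
    rw [div_le_iff₀ hx0]
    nlinarith
  have hdown : phi x ≤ (1 + ε) * α * x := by
    have h := mill_lower x hx0
    rw [hrx] at h
    have h2 : phi x ≤ (1 + 1/x^2) * α * x := by
      rw [div_le_iff₀ hx0] at h; linarith
    have h3 : (1 + 1/x^2) * α * x = α * x + α * (1/x) := by field_simp
    have h4 : α * (1/x) ≤ α * (ε * x) := by nlinarith
    nlinarith
  -- move to exponential form
  have hphix : Real.exp (-x^2/2) = c * phi x := by
    rw [phi, hc, ← mul_assoc, mul_inv_cancel₀ (ne_of_gt sqrt2pi_pos), one_mul]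
  have hexp_lb : c * α * x ≤ Real.exp (-x^2/2) := by
    rw [hphix]
    calc c * α * x = c * (α * x) := by ring
      _ ≤ c * phi x := mul_le_mul_of_nonneg_left hup hc0.le
  have hexp_ub : Real.exp (-x^2/2) ≤ (1 + ε) * c * α * x := by
    rw [hphix]
    calc c * phi x ≤ c * ((1 + ε) * α * x) := mul_le_mul_of_nonneg_left hdown hc0.le
      _ = (1 + ε) * c * α * x := by ring
  have hk2 : (0:ℝ) ≤ k^2 := sq_nonneg k
  have hexp_pow : Real.exp (-x^2/2) ^ (k^2) = Real.exp (-(k*x)^2/2) := by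
    rw [← Real.exp_mul]; congr 1; ring
  rw [hinv]
  constructor
  · have h := Real.rpow_le_rpow (by positivity) hexp_lb hk2
    rw [hexp_pow] at h
    calc c⁻¹ * (c * α * x) ^ (k^2) ≤ c⁻¹ * Real.exp (-(k*x)^2/2) :=
          mul_le_mul_of_nonneg_left h (by positivity)
      _ = phi (k * x) := by rw [phi]
  · have h := Real.rpow_le_rpow (Real.exp_nonneg _) hexp_ub hk2
    rw [hexp_pow] at h
    calc phi (k * x) = c⁻¹ * Real.exp (-(k*x)^2/2) := by rw [phi]
      _ ≤ c⁻¹ * ((1 + ε) * c * α * x) ^ (k^2) :=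
          mul_le_mul_of_nonneg_left h (by positivity)
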